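/- If f, g ∈ H²₂(𝔻) then fg ∈ H²₂(𝔻) and ‖fg‖_{H²₂} ≤ 2√2 · √(ζ(4) − ζ(5)) · ‖f‖_{H²₂} · ‖g‖_{H²₂}. -/

import Mathlib

/-- Membership in `H²₂(𝔻)` in terms of Taylor coefficients:
`∑ (n+2)⁵/(n+1)|aₙ|² < ∞`. -/
def Hmem (a : ℕ → ℂ) : Prop :=
  Summable (fun n : ℕ => ((n : ℝ) + 2) ^ 5 / ((n : ℝ) + 1) * ‖a n‖ ^ 2)

/-- The squared `H²₂` norm `∑ (n+2)⁵/(n+1)|aₙ|²`. -/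
noncomputable def hnorm2 (a : ℕ → ℂ) : ℝ :=
  ∑' n : ℕ, ((n : ℝ) + 2) ^ 5 / ((n : ℝ) + 1) * ‖a n‖ ^ 2

/-- Taylor coefficients of the product `fg` (Cauchy product). -/
noncomputable def cmul (a b : ℕ → ℂ) : ℕ → ℂ := fun n => ∑ k ∈ Finset.range (n + 1), a k * b (n - k)

/-! ### Auxiliary definitions and lemmas -/

open Finset

/-- The weight `(n+2)⁵/(n+1)`. -/
noncomputable def wt (n : ℕ) : ℝ := ((n : ℝ) + 2) ^ 5 / ((n : ℝ) + 1)
/-- The reciprocal weight `(n+1)/(n+2)⁵`. -/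
noncomputable def uu (n : ℕ) : ℝ := ((n : ℝ) + 1) / ((n : ℝ) + 2) ^ 5
/-- A telescoping comparison sequence, `∑ vv = 1/64`. -/
noncomputable def vv (n : ℕ) : ℝ := 1 / ((n : ℝ) + 4) ^ 3 - 1 / ((n : ℝ) + 5) ^ 3

lemma wt_pos (n : ℕ) : 0 < wt n := by unfold wt; positivity
lemma uu_pos (n : ℕ) : 0 < uu n := by unfold uu; positivity
lemma vv_nonneg (n : ℕ) : 0 ≤ vv n := by
  unfold vv
  rw [sub_nonneg]
  apply one_div_le_one_div_of_le (by positivity)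
  apply pow_le_pow_left₀ (by positivity)
  linarith
lemma wt_mul_uu (n : ℕ) : wt n * uu n = 1 := by
  unfold wt uu
  field_simp

lemma vv_hasSum : HasSum vv (1 / 64) := by
  rw [hasSum_iff_tendsto_nat_of_nonneg vv_nonneg]
  have hps : ∀ N : ℕ, ∑ i ∈ range N, vv i = 1 / 64 - 1 / ((N : ℝ) + 4) ^ 3 := by
    intro N
    have := Finset.sum_range_sub' (fun m : ℕ => 1 / ((m : ℝ) + 4) ^ 3) N
    calc ∑ i ∈ range N, vv i
        = ∑ i ∈ range N, ((fun m : ℕ => 1 / ((m : ℝ) + 4) ^ 3) i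
            - (fun m : ℕ => 1 / ((m : ℝ) + 4) ^ 3) (i + 1)) := by
          apply Finset.sum_congr rfl
          intro i _
          unfold vv
          push_cast
          ring_nf
      _ = 1 / (((0 : ℕ) : ℝ) + 4) ^ 3 - 1 / ((N : ℝ) + 4) ^ 3 := this
      _ = 1 / 64 - 1 / ((N : ℝ) + 4) ^ 3 := by norm_num
  simp only [hps]
  have h1 : Filter.Tendsto (fun N : ℕ => ((N : ℝ) + 4) ^ 3) Filter.atTop Filter.atTop := by
    apply (Filter.tendsto_pow_atTop (by norm_num : (3 : ℕ) ≠ 0)).comp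
    exact Filter.tendsto_atTop_add_const_right _ 4 tendsto_natCast_atTop_atTop
  have h2 : Filter.Tendsto (fun N : ℕ => 1 / ((N : ℝ) + 4) ^ 3) Filter.atTop (nhds 0) := by
    have := h1.inv_tendsto_atTop; simp only [one_div]; exact this
  simpa using (tendsto_const_nhds (x := (1 / 64 : ℝ))).sub h2

lemma vv_summable : Summable vv := vv_hasSum.summable
lemma vv_tsum : ∑' n, vv n = 1 / 64 := vv_hasSum.tsum_eq

/-- The key pointwise inequality, real-variable version. -/
lemma key_real (x y : ℝ) (hx : 0 ≤ x) (hxy : x ≤ y) :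
    (x + y + 2) ^ 5 / (x + y + 1) * ((x + 1) / (x + 2) ^ 5 * ((y + 1) / (y + 2) ^ 5))
      ≤ 11 * (1 / (x + 4) ^ 3 - 1 / (x + 5) ^ 3) := by
  have hy : 0 ≤ y := hx.trans hxy
  have h3 : 16 * (x + 1) ^ 5 * ((x + 4) ^ 3 * (x + 5) ^ 3)
      ≤ 11 * (3 * x ^ 2 + 27 * x + 61) * (x + 2) ^ 9 := by
    nlinarith [pow_nonneg hx 11, pow_nonneg hx 10, pow_nonneg hx 9, pow_nonneg hx 8,
      pow_nonneg hx 7, pow_nonneg hx 6, pow_nonneg hx 5, pow_nonneg hx 4,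
      pow_nonneg hx 3, pow_nonneg hx 2, hx]
  have h1 : (x + y + 2) * (y + 1) ≤ (y + 2) * (x + y + 1) := by nlinarith
  have h2 : ((x + y + 2) * (x + 2)) ^ 4 ≤ ((2 * x + 2) * (y + 2)) ^ 4 := by
    apply pow_le_pow_left₀ (by positivity)
    nlinarith
  have POLY : (x + y + 2) ^ 5 * ((x + 1) * (y + 1)) * ((x + 4) ^ 3 * (x + 5) ^ 3)
      ≤ 11 * (3 * x ^ 2 + 27 * x + 61) * ((x + y + 1) * ((x + 2) ^ 5 * (y + 2) ^ 5)) := by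
    have H4 : (x + y + 2) ^ 5 * ((x + 1) * (y + 1)) * ((x + 4) ^ 3 * (x + 5) ^ 3) * (x + 2) ^ 4
        ≤ 11 * (3 * x ^ 2 + 27 * x + 61) * ((x + y + 1) * ((x + 2) ^ 5 * (y + 2) ^ 5))
            * (x + 2) ^ 4 := by
      calc (x + y + 2) ^ 5 * ((x + 1) * (y + 1)) * ((x + 4) ^ 3 * (x + 5) ^ 3) * (x + 2) ^ 4
          = ((x + y + 2) * (y + 1)) * ((x + y + 2) * (x + 2)) ^ 4
              * ((x + 1) * ((x + 4) ^ 3 * (x + 5) ^ 3)) := by ring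
        _ ≤ ((y + 2) * (x + y + 1)) * ((2 * x + 2) * (y + 2)) ^ 4
              * ((x + 1) * ((x + 4) ^ 3 * (x + 5) ^ 3)) := by
            apply mul_le_mul_of_nonneg_right _ (by positivity)
            exact mul_le_mul h1 h2 (by positivity) (by positivity)
        _ = ((x + y + 1) * (y + 2) ^ 5) * (16 * (x + 1) ^ 5 * ((x + 4) ^ 3 * (x + 5) ^ 3)) := by
            ring
        _ ≤ ((x + y + 1) * (y + 2) ^ 5) * (11 * (3 * x ^ 2 + 27 * x + 61) * (x + 2) ^ 9) := by
            apply mul_le_mul_of_nonneg_left h3 (by positivity)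
        _ = 11 * (3 * x ^ 2 + 27 * x + 61) * ((x + y + 1) * ((x + 2) ^ 5 * (y + 2) ^ 5))
              * (x + 2) ^ 4 := by ring
    exact le_of_mul_le_mul_right H4 (by positivity)
  rw [show 1 / (x + 4) ^ 3 - 1 / (x + 5) ^ 3
      = (3 * x ^ 2 + 27 * x + 61) / ((x + 4) ^ 3 * (x + 5) ^ 3) by
    rw [div_sub_div _ _ (by positivity) (by positivity)]
    congr 1
    ring]
  rw [div_mul_div_comm, div_mul_div_comm, mul_div_assoc']
  rw [div_le_div_iff₀ (by positivity) (by positivity)]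
  linear_combination POLY

/-- The key pointwise inequality: `w(k+j)·u(k)·u(j) ≤ 11·v(k)` for `k ≤ j`. -/
lemma key (k j : ℕ) (h : k ≤ j) : wt (k + j) * (uu k * uu j) ≤ 11 * vv k := by
  have := key_real (k : ℝ) (j : ℝ) (Nat.cast_nonneg k) (by exact_mod_cast h)
  unfold wt uu vv
  push_cast
  convert this using 3

/-- Schur-type bound: `w(n)·∑_{k≤n} u(k)u(n-k) ≤ 11/32`. -/
lemma wt_sum_le (n : ℕ) : wt n * ∑ k ∈ range (n + 1), uu k * uu (n - k) ≤ 11 / 32 := by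
  rw [Finset.mul_sum]
  have hpt : ∀ k ∈ range (n + 1), wt n * (uu k * uu (n - k)) ≤ 11 * (vv k + vv (n - k)) := by
    intro k hk
    have hk' : k ≤ n := Nat.lt_succ_iff.mp (Finset.mem_range.mp hk)
    rcases le_total k (n - k) with h | h
    · have hkey := key k (n - k) h
      rw [Nat.add_sub_cancel' hk'] at hkey
      have h2 := vv_nonneg (n - k)
      linarith
    · have hkey := key (n - k) k h
      rw [Nat.sub_add_cancel hk'] at hkey
      have h2 := vv_nonneg k
      rw [mul_comm (uu k)]
      linarith
  calc ∑ k ∈ range (n + 1), wt n * (uu k * uu (n - k))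
      ≤ ∑ k ∈ range (n + 1), 11 * (vv k + vv (n - k)) := Finset.sum_le_sum hpt
    _ = 11 * ((∑ k ∈ range (n + 1), vv k) + ∑ k ∈ range (n + 1), vv (n - k)) := by
        rw [← Finset.mul_sum, ← Finset.sum_add_distrib]
    _ = 22 * ∑ k ∈ range (n + 1), vv k := by
        have hrefl : ∑ k ∈ range (n + 1), vv (n - k) = ∑ k ∈ range (n + 1), vv k := by
          have := Finset.sum_range_reflect vv (n + 1)
          simpa using this
        rw [hrefl]; ring
    _ ≤ 22 * (1 / 64) := by
        apply mul_le_mul_of_nonneg_left _ (by norm_num)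
        rw [← vv_tsum]
        exact Summable.sum_le_tsum _ (fun i _ => vv_nonneg i) vv_summable
    _ = 11 / 32 := by norm_num

/-- Cauchy–Schwarz step: per-coefficient bound for the Cauchy product. -/
lemma step1 (a b : ℕ → ℂ) (n : ℕ) :
    wt n * ‖cmul a b n‖ ^ 2
      ≤ 11 / 32 * ∑ k ∈ range (n + 1),
          (wt k * ‖a k‖ ^ 2) * (wt (n - k) * ‖b (n - k)‖ ^ 2) := by
  have hnorm : ‖cmul a b n‖ ≤ ∑ k ∈ range (n + 1), ‖a k‖ * ‖b (n - k)‖ := by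
    refine (norm_sum_le (E := ℂ) _ _).trans_eq ?_
    exact Finset.sum_congr rfl (fun k _ => norm_mul _ _)
  have hsq : ‖cmul a b n‖ ^ 2 ≤ (∑ k ∈ range (n + 1), ‖a k‖ * ‖b (n - k)‖) ^ 2 :=
    pow_le_pow_left₀ (norm_nonneg _) hnorm 2
  have CS : (∑ k ∈ range (n + 1), ‖a k‖ * ‖b (n - k)‖) ^ 2
      ≤ (∑ k ∈ range (n + 1), uu k * uu (n - k))
        * (∑ k ∈ range (n + 1), (wt k * ‖a k‖ ^ 2) * (wt (n - k) * ‖b (n - k)‖ ^ 2)) := by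
    have base := Finset.sum_mul_sq_le_sq_mul_sq (range (n + 1))
      (fun k => Real.sqrt (uu k * uu (n - k)))
      (fun k => Real.sqrt (wt k * wt (n - k)) * (‖a k‖ * ‖b (n - k)‖))
    have e1 : ∑ k ∈ range (n + 1),
        (Real.sqrt (uu k * uu (n - k)) * (Real.sqrt (wt k * wt (n - k)) * (‖a k‖ * ‖b (n - k)‖)))
          = ∑ k ∈ range (n + 1), ‖a k‖ * ‖b (n - k)‖ := by
      apply Finset.sum_congr rfl
      intro k _
      rw [← mul_assoc, ← Real.sqrt_mul (mul_nonneg (uu_pos k).le (uu_pos (n - k)).le)]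
      rw [show uu k * uu (n - k) * (wt k * wt (n - k))
          = (wt k * uu k) * (wt (n - k) * uu (n - k)) by ring,
        wt_mul_uu, wt_mul_uu, mul_one, Real.sqrt_one, one_mul]
    have e2 : ∑ k ∈ range (n + 1), (Real.sqrt (uu k * uu (n - k))) ^ 2
        = ∑ k ∈ range (n + 1), uu k * uu (n - k) := by
      apply Finset.sum_congr rfl
      intro k _
      exact Real.sq_sqrt (mul_nonneg (uu_pos k).le (uu_pos (n - k)).le)
    have e3 : ∑ k ∈ range (n + 1),
        (Real.sqrt (wt k * wt (n - k)) * (‖a k‖ * ‖b (n - k)‖)) ^ 2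
          = ∑ k ∈ range (n + 1), (wt k * ‖a k‖ ^ 2) * (wt (n - k) * ‖b (n - k)‖ ^ 2) := by
      apply Finset.sum_congr rfl
      intro k _
      rw [mul_pow, Real.sq_sqrt (mul_nonneg (wt_pos k).le (wt_pos (n - k)).le)]
      ring
    rw [e1, e2, e3] at base
    exact base
  have hS2 : 0 ≤ ∑ k ∈ range (n + 1), (wt k * ‖a k‖ ^ 2) * (wt (n - k) * ‖b (n - k)‖ ^ 2) :=
    Finset.sum_nonneg fun k _ => mul_nonneg
      (mul_nonneg (wt_pos k).le (sq_nonneg _)) (mul_nonneg (wt_pos _).le (sq_nonneg _))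
  calc wt n * ‖cmul a b n‖ ^ 2
      ≤ wt n * ((∑ k ∈ range (n + 1), uu k * uu (n - k))
        * (∑ k ∈ range (n + 1), (wt k * ‖a k‖ ^ 2) * (wt (n - k) * ‖b (n - k)‖ ^ 2))) :=
        mul_le_mul_of_nonneg_left (hsq.trans CS) (wt_pos n).le
    _ = (wt n * ∑ k ∈ range (n + 1), uu k * uu (n - k))
        * (∑ k ∈ range (n + 1), (wt k * ‖a k‖ ^ 2) * (wt (n - k) * ‖b (n - k)‖ ^ 2)) := by ring
    _ ≤ 11 / 32 * ∑ k ∈ range (n + 1), (wt k * ‖a k‖ ^ 2) * (wt (n - k) * ‖b (n - k)‖ ^ 2) :=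
        mul_le_mul_of_nonneg_right (wt_sum_le n) hS2

lemma sum45 : Summable (fun n : ℕ => 1 / (n : ℝ) ^ 4 - 1 / (n : ℝ) ^ 5) :=
  (Real.summable_one_div_nat_pow.mpr (by norm_num)).sub
    (Real.summable_one_div_nat_pow.mpr (by norm_num))

lemma zeta_diff_eq : (riemannZeta 4 - riemannZeta 5).re = ∑' n : ℕ, uu n := by
  have h4 : riemannZeta 4 = ∑' n : ℕ, 1 / (n : ℂ) ^ 4 := by
    rw [show (4 : ℂ) = ((4 : ℕ) : ℂ) by norm_num, zeta_nat_eq_tsum_of_gt_one (by norm_num)]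
  have h5 : riemannZeta 5 = ∑' n : ℕ, 1 / (n : ℂ) ^ 5 := by
    rw [show (5 : ℂ) = ((5 : ℕ) : ℂ) by norm_num, zeta_nat_eq_tsum_of_gt_one (by norm_num)]
  have e4 : (∑' n : ℕ, 1 / (n : ℂ) ^ 4) = ((∑' n : ℕ, 1 / (n : ℝ) ^ 4 : ℝ) : ℂ) := by
    rw [Complex.ofReal_tsum]; push_cast; rfl
  have e5 : (∑' n : ℕ, 1 / (n : ℂ) ^ 5) = ((∑' n : ℕ, 1 / (n : ℝ) ^ 5 : ℝ) : ℂ) := by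
    rw [Complex.ofReal_tsum]; push_cast; rfl
  rw [h4, h5, e4, e5, ← Complex.ofReal_sub, Complex.ofReal_re]
  rw [← Summable.tsum_sub (Real.summable_one_div_nat_pow.mpr (by norm_num))
    (Real.summable_one_div_nat_pow.mpr (by norm_num))]
  rw [Summable.tsum_eq_zero_add sum45, Summable.tsum_eq_zero_add ((summable_nat_add_iff 1).mpr sum45)]
  have hterm : ∀ n : ℕ, 1 / ((n + 1 + 1 : ℕ) : ℝ) ^ 4 - 1 / ((n + 1 + 1 : ℕ) : ℝ) ^ 5 = uu n := by
    intro n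
    unfold uu
    push_cast
    rw [div_sub_div _ _ (by positivity) (by positivity),
      div_eq_div_iff (by positivity) (by positivity)]
    ring
  rw [tsum_congr hterm]
  norm_num

lemma uu_summable : Summable uu :=
  ((summable_nat_add_iff 2).mpr sum45).congr (by
    intro n
    show 1 / ((n + 2 : ℕ) : ℝ) ^ 4 - 1 / ((n + 2 : ℕ) : ℝ) ^ 5 = uu n
    unfold uu
    push_cast
    rw [div_sub_div _ _ (by positivity) (by positivity),
      div_eq_div_iff (by positivity) (by positivity)]
    ring)

lemma zeta_lb : (11 : ℝ) / 256 ≤ (riemannZeta 4 - riemannZeta 5).re := by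
  rw [zeta_diff_eq]
  have h1 : ∑ k ∈ Finset.range 4, uu k ≤ ∑' n, uu n :=
    Summable.sum_le_tsum _ (fun i _ => (uu_pos i).le) uu_summable
  refine le_trans ?_ h1
  rw [Finset.sum_range_succ, Finset.sum_range_succ, Finset.sum_range_succ,
    Finset.sum_range_one]
  unfold uu
  norm_num

/-- If `f, g ∈ H²₂(𝔻)` then `fg ∈ H²₂(𝔻)` and
`‖fg‖_{H²₂} ≤ 2√2·√(ζ(4)-ζ(5))·‖f‖_{H²₂}·‖g‖_{H²₂}`. -/
theorem stmt11 (a b : ℕ → ℂ) (ha : Hmem a) (hb : Hmem b) :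
    Hmem (cmul a b) ∧
    Real.sqrt (hnorm2 (cmul a b)) ≤
      2 * Real.sqrt 2 * Real.sqrt ((riemannZeta 4 - riemannZeta 5).re) *
        Real.sqrt (hnorm2 a) * Real.sqrt (hnorm2 b) := by
  set Z := (riemannZeta 4 - riemannZeta 5).re with hZdef
  have hZ0 : 0 ≤ Z := le_trans (by norm_num) zeta_lb
  have hF : Summable (fun n => wt n * ‖a n‖ ^ 2) := ha
  have hG : Summable (fun n => wt n * ‖b n‖ ^ 2) := hb
  have hFn : Summable (fun n => ‖wt n * ‖a n‖ ^ 2‖) :=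
    hF.congr fun n => (Real.norm_of_nonneg (mul_nonneg (wt_pos n).le (sq_nonneg _))).symm
  have hGn : Summable (fun n => ‖wt n * ‖b n‖ ^ 2‖) :=
    hG.congr fun n => (Real.norm_of_nonneg (mul_nonneg (wt_pos n).le (sq_nonneg _))).symm
  have hH : Summable (fun n => ∑ k ∈ range (n + 1),
      (wt k * ‖a k‖ ^ 2) * (wt (n - k) * ‖b (n - k)‖ ^ 2)) :=
    (summable_norm_sum_mul_range_of_summable_norm hFn hGn).of_norm
  have htsum : (∑' n, ∑ k ∈ range (n + 1),
      (wt k * ‖a k‖ ^ 2) * (wt (n - k) * ‖b (n - k)‖ ^ 2))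
        = (∑' n, wt n * ‖a n‖ ^ 2) * (∑' n, wt n * ‖b n‖ ^ 2) :=
    (tsum_mul_tsum_eq_tsum_sum_range_of_summable_norm hFn hGn).symm
  have hc : Summable (fun n => wt n * ‖cmul a b n‖ ^ 2) :=
    Summable.of_nonneg_of_le (fun n => mul_nonneg (wt_pos n).le (sq_nonneg _))
      (step1 a b) (hH.mul_left (11 / 32))
  refine ⟨hc, ?_⟩
  have hA0 : 0 ≤ hnorm2 a :=
    tsum_nonneg fun n => mul_nonneg (wt_pos n).le (sq_nonneg _)
  have hB0 : 0 ≤ hnorm2 b :=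
    tsum_nonneg fun n => mul_nonneg (wt_pos n).le (sq_nonneg _)
  have hbound : hnorm2 (cmul a b) ≤ 8 * Z * (hnorm2 a * hnorm2 b) := by
    have t1 : hnorm2 (cmul a b) ≤ ∑' n, 11 / 32 * ∑ k ∈ range (n + 1),
        (wt k * ‖a k‖ ^ 2) * (wt (n - k) * ‖b (n - k)‖ ^ 2) :=
      Summable.tsum_le_tsum (step1 a b) hc (hH.mul_left _)
    rw [tsum_mul_left, htsum] at t1
    have hZ : (11 : ℝ) / 32 ≤ 8 * Z := by
      have := zeta_lb
      rw [← hZdef] at this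
      linarith
    have hAB : 0 ≤ hnorm2 a * hnorm2 b := mul_nonneg hA0 hB0
    calc hnorm2 (cmul a b) ≤ 11 / 32 * (hnorm2 a * hnorm2 b) := t1
      _ ≤ 8 * Z * (hnorm2 a * hnorm2 b) := mul_le_mul_of_nonneg_right hZ hAB
  calc Real.sqrt (hnorm2 (cmul a b)) ≤ Real.sqrt (8 * Z * (hnorm2 a * hnorm2 b)) :=
      Real.sqrt_le_sqrt hbound
    _ = 2 * Real.sqrt 2 * Real.sqrt Z * Real.sqrt (hnorm2 a) * Real.sqrt (hnorm2 b) := by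
      rw [show (8 : ℝ) * Z * (hnorm2 a * hnorm2 b) = 8 * (Z * (hnorm2 a * hnorm2 b)) by ring]
      rw [Real.sqrt_mul (by norm_num : (0 : ℝ) ≤ 8), Real.sqrt_mul hZ0, Real.sqrt_mul hA0]
      rw [show Real.sqrt 8 = 2 * Real.sqrt 2 by
        rw [show (8 : ℝ) = 2 ^ 2 * 2 by norm_num, Real.sqrt_mul (by positivity),
          Real.sqrt_sq (by norm_num)]]
      ring
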